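/- Let E and F be complementary complex-linear subspaces of ℂ^k (that is, ℂ^k = E ⊕ F), let F' := E^⊥ be the orthogonal complement of E with respect to the standard Hermitian inner product on ℂ^k, and let P_E and P_{F'} denote the orthogonal projections onto E and F'. Let 0 < ε < 1 and s > 0, and let h : {v ∈ E : ‖v‖ < s} → F be holomorphic with h(0) = 0 and ‖h(v₁) − h(v₂)‖ ≤ ε‖v₁ − v₂‖ for all v₁, v₂. Then there exists a holomorphic map h' : {v ∈ E : ‖v‖ < (1 − ε)s} → F' with h'(0) = 0 and ‖h'(v₁) − h'(v₂)‖ ≤ (ε/(1 − ε))‖v₁ − v₂‖ for all v₁, v₂, such that {v + h'(v) : v ∈ E, ‖v‖ < (1 − ε)s} ⊆ {v + h(v) : v ∈ E, ‖v‖ < s}. -/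

import Mathlib

/-- The graph `{v + h(v) : v ∈ E, ‖v‖ < s}` of a map `h : E → F` between subspaces of `ℂ^k`. -/
def graphOver {k : ℕ} (E F : Submodule ℂ (EuclideanSpace ℂ (Fin k))) (h : E → F) (s : ℝ) :
    Set (EuclideanSpace ℂ (Fin k)) :=
  (fun v : E => (v : EuclideanSpace ℂ (Fin k)) + (h v : EuclideanSpace ℂ (Fin k))) ''
    Metric.ball 0 s


/-- Auxiliary surjectivity lemma: a Lipschitz-small perturbation of the identity on a ball
of a complete normed space hits every point of a smaller ball. -/
theorem aux_surj {X : Type*} [NormedAddCommGroup X] [NormedSpace ℝ X] [CompleteSpace X]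
    (ε s : ℝ) (hε0 : 0 < ε) (hε1 : ε < 1) (hs : 0 < s) (ψ : X → X) (hψ0 : ψ 0 = 0)
    (hψlip : ∀ v₁ ∈ Metric.ball (0 : X) s, ∀ v₂ ∈ Metric.ball (0 : X) s,
      ‖ψ v₁ - ψ v₂‖ ≤ ε * ‖v₁ - v₂‖)
    (w : X) (hw : ‖w‖ < (1 - ε) * s) : ∃ v : X, ‖v‖ < s ∧ v + ψ v = w := by
  have hE1 : (0 : ℝ) < 1 - ε := by linarith
  set r : ℝ := ‖w‖ / (1 - ε) with hrdef
  have hr0 : 0 ≤ r := div_nonneg (norm_nonneg _) hE1.le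
  have hrs : r < s := by
    rw [hrdef, div_lt_iff₀ hE1]
    linarith [hw]
  have hrball : ∀ v : X, v ∈ Metric.closedBall (0 : X) r → v ∈ Metric.ball (0 : X) s := by
    intro v hv
    rw [Metric.mem_closedBall, dist_zero_right] at hv
    rw [Metric.mem_ball, dist_zero_right]
    exact lt_of_le_of_lt hv hrs
  set T : X → X := fun v => w - ψ v with hTdef
  have h0ball : (0 : X) ∈ Metric.ball (0 : X) s := by
    rw [Metric.mem_ball, dist_zero_right, norm_zero]; exact hs
  have hTnorm : ∀ v : X, v ∈ Metric.closedBall (0 : X) r → ‖T v‖ ≤ r := by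
    intro v hv
    have hvs := hrball v hv
    have hvr : ‖v‖ ≤ r := by rwa [Metric.mem_closedBall, dist_zero_right] at hv
    have hhv : ‖ψ v‖ ≤ ε * ‖v‖ := by
      have := hψlip v hvs 0 h0ball
      simpa [hψ0] using this
    have : ‖T v‖ ≤ ‖w‖ + ‖ψ v‖ := norm_sub_le _ _
    have hεv : ε * ‖v‖ ≤ ε * r := by gcongr
    have hwr : ‖w‖ = r * (1 - ε) := by
      rw [hrdef]; field_simp
    nlinarith
  have hTmap : Set.MapsTo T (Metric.closedBall (0 : X) r) (Metric.closedBall (0 : X) r) := by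
    intro v hv
    rw [Metric.mem_closedBall, dist_zero_right]
    exact hTnorm v hv
  have hTlip : ∀ v₁ ∈ Metric.closedBall (0 : X) r, ∀ v₂ ∈ Metric.closedBall (0 : X) r,
      ‖T v₁ - T v₂‖ ≤ ε * ‖v₁ - v₂‖ := by
    intro v₁ hv₁ v₂ hv₂
    have : T v₁ - T v₂ = -(ψ v₁ - ψ v₂) := by
      simp only [hTdef]
      abel
    rw [this, norm_neg]
    exact hψlip v₁ (hrball v₁ hv₁) v₂ (hrball v₂ hv₂)
  set K : NNReal := ⟨ε, hε0.le⟩ with hKdef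
  have hcontr : ContractingWith K (hTmap.restrict T _ _) := by
    constructor
    · exact_mod_cast hε1
    · apply LipschitzWith.of_dist_le_mul
      rintro ⟨v₁, hv₁⟩ ⟨v₂, hv₂⟩
      simp only [Subtype.dist_eq, Set.MapsTo.val_restrict_apply]
      rw [dist_eq_norm, dist_eq_norm]
      exact hTlip v₁ hv₁ v₂ hv₂
  obtain ⟨v, hvmem, hvfix, -⟩ := hcontr.exists_fixedPoint'
    (Metric.isClosed_closedBall.isComplete) hTmap (Metric.mem_closedBall_self hr0) (edist_ne_top _ _)
  refine ⟨v, ?_, ?_⟩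
  · rw [Metric.mem_closedBall, dist_zero_right] at hvmem
    exact lt_of_le_of_lt hvmem hrs
  · have hfix : w - ψ v = v := hvfix
    have := sub_eq_iff_eq_add.mp hfix
    rw [this]

set_option maxHeartbeats 1600000 in
set_option synthInstance.maxHeartbeats 200000 in
/-- **Straightening a Lipschitz holomorphic graph onto the orthogonal complement.** A graph over
`E` with values in an arbitrary complement `F`, with Lipschitz constant `ε < 1`, contains a graph
over `E` with values in the orthogonal complement `F' = Eᗮ`, of radius `(1−ε)s` and Lipschitz
constant `ε/(1−ε)`. -/
theorem stmt_4 (k : ℕ) (hk : 1 ≤ k)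
    (E F : Submodule ℂ (EuclideanSpace ℂ (Fin k))) (hEF : IsCompl E F)
    (ε s : ℝ) (hε0 : 0 < ε) (hε1 : ε < 1) (hs : 0 < s)
    (h : E → F) (hhol : DifferentiableOn ℂ h (Metric.ball 0 s)) (h0 : h 0 = 0)
    (hlip : ∀ v₁ ∈ Metric.ball (0 : E) s, ∀ v₂ ∈ Metric.ball (0 : E) s,
      ‖h v₁ - h v₂‖ ≤ ε * ‖v₁ - v₂‖) :
    ∃ h' : E → Eᗮ,
      DifferentiableOn ℂ h' (Metric.ball 0 ((1 - ε) * s)) ∧ h' 0 = 0 ∧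
      (∀ v₁ ∈ Metric.ball (0 : E) ((1 - ε) * s), ∀ v₂ ∈ Metric.ball (0 : E) ((1 - ε) * s),
        ‖h' v₁ - h' v₂‖ ≤ ε / (1 - ε) * ‖v₁ - v₂‖) ∧
      graphOver E Eᗮ h' ((1 - ε) * s) ⊆ graphOver E F h s := by
  classical
  have hE1 : (0 : ℝ) < 1 - ε := by linarith
  set P : EuclideanSpace ℂ (Fin k) →L[ℂ] E := Submodule.orthogonalProjectionOnto E with hPdef
  set Q : EuclideanSpace ℂ (Fin k) →L[ℂ] Eᗮ := Submodule.orthogonalProjectionOnto Eᗮ with hQdef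
  set C : F →L[ℂ] E := P.comp F.subtypeL with hCdef
  have hPle : ∀ x : EuclideanSpace ℂ (Fin k), ‖P x‖ ≤ ‖x‖ := by
    intro x
    calc ‖P x‖ ≤ ‖P‖ * ‖x‖ := P.le_opNorm x
      _ ≤ 1 * ‖x‖ := by
          gcongr
          exact Submodule.orthogonalProjectionOnto_norm_le E
      _ = ‖x‖ := one_mul _
  have hQle : ∀ x : EuclideanSpace ℂ (Fin k), ‖Q x‖ ≤ ‖x‖ := by
    intro x
    calc ‖Q x‖ ≤ ‖Q‖ * ‖x‖ := Q.le_opNorm x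
      _ ≤ 1 * ‖x‖ := by
          gcongr
          exact Submodule.orthogonalProjectionOnto_norm_le Eᗮ
      _ = ‖x‖ := one_mul _
  have hCle : ∀ x : F, ‖C x‖ ≤ ‖x‖ := fun x => hPle x
  set Φ : E → E := fun v => v + C (h v) with hΦdef
  -- key Lipschitz estimates
  have hClip : ∀ v₁ ∈ Metric.ball (0 : E) s, ∀ v₂ ∈ Metric.ball (0 : E) s,
      ‖C (h v₁) - C (h v₂)‖ ≤ ε * ‖v₁ - v₂‖ := by
    intro v₁ hv₁ v₂ hv₂
    rw [← map_sub]
    exact (hCle _).trans (hlip v₁ hv₁ v₂ hv₂)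
  have hlow : ∀ v₁ ∈ Metric.ball (0 : E) s, ∀ v₂ ∈ Metric.ball (0 : E) s,
      (1 - ε) * ‖v₁ - v₂‖ ≤ ‖Φ v₁ - Φ v₂‖ := by
    intro v₁ hv₁ v₂ hv₂
    have hkey2 : v₁ - v₂ = (Φ v₁ - Φ v₂) - (C (h v₁) - C (h v₂)) := by
      simp only [hΦdef]; abel
    have h1 : ‖v₁ - v₂‖ ≤ ‖Φ v₁ - Φ v₂‖ + ‖C (h v₁) - C (h v₂)‖ := by
      rw [hkey2]; exact norm_sub_le _ _
    have h2 := hClip v₁ hv₁ v₂ hv₂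
    nlinarith [norm_nonneg (v₁ - v₂)]
  -- surjectivity onto the smaller ball
  have hsurj : ∀ w : E, ‖w‖ < (1 - ε) * s → ∃ v : E, ‖v‖ < s ∧ Φ v = w := by
    intro w hw
    have hψ0 : C (h 0) = 0 := by rw [h0, map_zero]
    exact aux_surj ε s hε0 hε1 hs (fun v => C (h v)) hψ0 hClip w hw
  have hgex : ∀ w : E, ∃ v : E, ‖w‖ < (1 - ε) * s → ‖v‖ < s ∧ Φ v = w := by
    intro w
    by_cases hw : ‖w‖ < (1 - ε) * s
    · obtain ⟨v, hvs, hfix⟩ := hsurj w hw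
      exact ⟨v, fun _ => ⟨hvs, hfix⟩⟩
    · exact ⟨0, fun hc => absurd hc hw⟩
  choose g hg using hgex
  have huniq : ∀ w : E, ‖w‖ < (1 - ε) * s → ∀ v : E, ‖v‖ < s → Φ v = w → g w = v := by
    intro w hw v hv hfix
    obtain ⟨hgs, hgfix⟩ := hg w hw
    by_contra hne
    have hball : ∀ u : E, ‖u‖ < s → u ∈ Metric.ball (0 : E) s := by
      intro u hu; rwa [Metric.mem_ball, dist_zero_right]
    have := hlow (g w) (hball _ hgs) v (hball _ hv)
    rw [hgfix, hfix, sub_self, norm_zero] at this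
    have : ‖g w - v‖ ≤ 0 := by nlinarith [norm_nonneg (g w - v)]
    exact hne (by rwa [← sub_eq_zero, ← norm_le_zero_iff])
  have hw0 : ‖(0 : E)‖ < (1 - ε) * s := by rw [norm_zero]; positivity
  have hg0 : g 0 = 0 := by
    apply huniq 0 hw0 0 (by rwa [norm_zero])
    simp [hΦdef, h0]
  -- define h'
  set h' : E → Eᗮ := fun w => Q ((h (g w) : EuclideanSpace ℂ (Fin k))) with hh'def
  have hh'0 : h' 0 = 0 := by simp [hh'def, hg0, h0]
  -- Lipschitz bound for g
  have hglip : ∀ w₁ : E, ‖w₁‖ < (1 - ε) * s → ∀ w₂ : E, ‖w₂‖ < (1 - ε) * s →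
      ‖g w₁ - g w₂‖ ≤ ‖w₁ - w₂‖ / (1 - ε) := by
    intro w₁ hw₁ w₂ hw₂
    obtain ⟨h₁s, h₁f⟩ := hg w₁ hw₁
    obtain ⟨h₂s, h₂f⟩ := hg w₂ hw₂
    have hball : ∀ u : E, ‖u‖ < s → u ∈ Metric.ball (0 : E) s := by
      intro u hu; rwa [Metric.mem_ball, dist_zero_right]
    have := hlow (g w₁) (hball _ h₁s) (g w₂) (hball _ h₂s)
    rw [h₁f, h₂f] at this
    rw [le_div_iff₀ hE1]
    linarith
  -- Lipschitz bound for h'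
  have hh'lip : ∀ w₁ : E, ‖w₁‖ < (1 - ε) * s → ∀ w₂ : E, ‖w₂‖ < (1 - ε) * s →
      ‖h' w₁ - h' w₂‖ ≤ ε / (1 - ε) * ‖w₁ - w₂‖ := by
    intro w₁ hw₁ w₂ hw₂
    obtain ⟨h₁s, h₁f⟩ := hg w₁ hw₁
    obtain ⟨h₂s, h₂f⟩ := hg w₂ hw₂
    have hball : ∀ u : E, ‖u‖ < s → u ∈ Metric.ball (0 : E) s := by
      intro u hu; rwa [Metric.mem_ball, dist_zero_right]
    have hco : h' w₁ - h' w₂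
        = Q (((h (g w₁) : EuclideanSpace ℂ (Fin k))) - ((h (g w₂) : EuclideanSpace ℂ (Fin k)))) := by
      rw [map_sub]
    have h1 : ‖h' w₁ - h' w₂‖ ≤ ‖h (g w₁) - h (g w₂)‖ := by
      rw [hco]
      refine (hQle _).trans ?_
      rw [← Submodule.coe_sub]
      exact le_of_eq (Submodule.norm_coe _)
    have h2 : ‖h (g w₁) - h (g w₂)‖ ≤ ε * ‖g w₁ - g w₂‖ :=
      hlip _ (hball _ h₁s) _ (hball _ h₂s)
    have h3 := hglip w₁ hw₁ w₂ hw₂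
    calc ‖h' w₁ - h' w₂‖ ≤ ε * ‖g w₁ - g w₂‖ := h1.trans h2
      _ ≤ ε * (‖w₁ - w₂‖ / (1 - ε)) := by gcongr
      _ = ε / (1 - ε) * ‖w₁ - w₂‖ := by ring
  -- differentiability
  have hdiff : DifferentiableOn ℂ h' (Metric.ball 0 ((1 - ε) * s)) := by
    intro w₀ hw₀mem
    have hw₀ : ‖w₀‖ < (1 - ε) * s := by
      rwa [Metric.mem_ball, dist_zero_right] at hw₀mem
    obtain ⟨hv₀s, hv₀f⟩ := hg w₀ hw₀
    have hv₀ball : g w₀ ∈ Metric.ball (0 : E) s := by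
      rwa [Metric.mem_ball, dist_zero_right]
    have hDh : DifferentiableAt ℂ h (g w₀) :=
      (hhol (g w₀) hv₀ball).differentiableAt (Metric.isOpen_ball.mem_nhds hv₀ball)
    set D : E →L[ℂ] F := fderiv ℂ h (g w₀) with hDdef
    have hD : HasFDerivAt h D (g w₀) := hDh.hasFDerivAt
    have hlipOn : LipschitzOnWith ⟨ε, hε0.le⟩ h (Metric.ball (0 : E) s) := by
      refine LipschitzOnWith.of_dist_le_mul ?_
      intro x hx y hy
      rw [dist_eq_norm, dist_eq_norm]
      exact hlip x hx y hy
    have hDnorm : ‖D‖ ≤ ε :=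
      hD.le_of_lipschitzOn (Metric.isOpen_ball.mem_nhds hv₀ball) hlipOn
    set B : E →L[ℂ] E := C.comp D with hBdef
    have hBnorm : ‖B‖ < 1 := by
      have : ‖B‖ ≤ ε := by
        apply ContinuousLinearMap.opNorm_le_bound _ hε0.le
        intro x
        calc ‖B x‖ = ‖C (D x)‖ := rfl
          _ ≤ ‖D x‖ := hCle _
          _ ≤ ‖D‖ * ‖x‖ := D.le_opNorm x
          _ ≤ ε * ‖x‖ := by gcongr
      linarith
    have hnB : ‖-B‖ < 1 := lt_of_le_of_lt (le_of_eq (norm_neg B)) hBnorm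
    set U : (E →L[ℂ] E)ˣ := Units.oneSub (-B) hnB with hUdef
    set A : E ≃L[ℂ] E := ContinuousLinearEquiv.ofUnit U with hAdef
    have hAcoe : (A : E →L[ℂ] E) = ContinuousLinearMap.id ℂ E + B := by
      show U.val = _
      rw [hUdef]
      show (1 : E →L[ℂ] E) - -B = _
      rw [sub_neg_eq_add, ContinuousLinearMap.one_def]
    have hΦA : HasFDerivAt Φ (A : E →L[ℂ] E) (g w₀) := by
      rw [hAcoe]
      exact (hasFDerivAt_id (g w₀)).add (C.hasFDerivAt.comp (g w₀) hD)
    have hgc : ContinuousAt g w₀ := by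
      have hlipg : LipschitzOnWith ⟨(1 - ε)⁻¹, by positivity⟩ g
          (Metric.ball (0 : E) ((1 - ε) * s)) := by
        refine LipschitzOnWith.of_dist_le_mul ?_
        intro x hx y hy
        rw [Metric.mem_ball, dist_zero_right] at hx hy
        rw [dist_eq_norm, dist_eq_norm]
        have := hglip x hx y hy
        rw [div_eq_inv_mul] at this
        exact this
      exact hlipg.continuousOn.continuousAt (Metric.isOpen_ball.mem_nhds hw₀mem)
    have hev : ∀ᶠ y in nhds w₀, Φ (g y) = y := by
      filter_upwards [Metric.isOpen_ball.mem_nhds hw₀mem] with y hy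
      rw [Metric.mem_ball, dist_zero_right] at hy
      exact (hg y hy).2
    have hgd : HasFDerivAt g ((A.symm : E →L[ℂ] E)) w₀ :=
      hΦA.of_local_left_inverse hgc hev
    have : DifferentiableAt ℂ h' w₀ := by
      have h1 : DifferentiableAt ℂ (fun w => h (g w)) w₀ := hDh.comp w₀ hgd.differentiableAt
      have h2 : DifferentiableAt ℂ (fun w => (h (g w) : EuclideanSpace ℂ (Fin k))) w₀ :=
        F.subtypeL.differentiableAt.comp w₀ h1
      exact Q.differentiableAt.comp w₀ h2
    exact this.differentiableWithinAt
  -- graph containment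
  refine ⟨h', hdiff, hh'0, ?_, ?_⟩
  · intro v₁ hv₁ v₂ hv₂
    rw [Metric.mem_ball, dist_zero_right] at hv₁ hv₂
    exact hh'lip v₁ hv₁ v₂ hv₂
  · rintro x ⟨w, hwmem, rfl⟩
    rw [Metric.mem_ball, dist_zero_right] at hwmem
    obtain ⟨hgs, hgf⟩ := hg w hwmem
    refine ⟨g w, by rwa [Metric.mem_ball, dist_zero_right], ?_⟩
    have hco : ((g w : EuclideanSpace ℂ (Fin k)))
        + ((C (h (g w)) : EuclideanSpace ℂ (Fin k))) = (w : EuclideanSpace ℂ (Fin k)) := by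
      have := congrArg (fun z : E => (z : EuclideanSpace ℂ (Fin k))) hgf
      simpa [hΦdef] using this
    have hdecomp : ((P ((h (g w) : EuclideanSpace ℂ (Fin k))) : EuclideanSpace ℂ (Fin k)))
        + ((Q ((h (g w) : EuclideanSpace ℂ (Fin k))) : EuclideanSpace ℂ (Fin k)))
        = ((h (g w) : EuclideanSpace ℂ (Fin k))) :=
      Submodule.starProjection_add_starProjection_orthogonal (K := E) _
    have hCco : ((C (h (g w)) : EuclideanSpace ℂ (Fin k)))
        = ((P ((h (g w) : EuclideanSpace ℂ (Fin k))) : EuclideanSpace ℂ (Fin k))) := rfl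
    calc ((g w : EuclideanSpace ℂ (Fin k))) + ((h (g w) : EuclideanSpace ℂ (Fin k)))
        = (g w : EuclideanSpace ℂ (Fin k))
          + (((P ((h (g w) : EuclideanSpace ℂ (Fin k))) : EuclideanSpace ℂ (Fin k)))
          + ((Q ((h (g w) : EuclideanSpace ℂ (Fin k))) : EuclideanSpace ℂ (Fin k)))) := by
          rw [hdecomp]
      _ = (w : EuclideanSpace ℂ (Fin k)) + ((h' w : EuclideanSpace ℂ (Fin k))) := by
          rw [← hco, hCco, hh'def]; abel
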